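/- Let Ω be a bounded open subset of ℝⁿ and α ∈ (0,1]. Let K ⊆ C^{0,α}(cl Ω). Then the following conditions are equivalent: (i) K is relatively compact in C^{0,α}(cl Ω) with respect to the norm ‖·‖_{0,α}, i.e. every sequence in K admits a subsequence (k_j) and a function k ∈ C^{0,α}(cl Ω) with ‖k_j − k‖_{0,α} → 0; (ii) for every x ∈ Ω the set {k(x) : k ∈ K} is relatively compact in ℝ, and for every ε > 0 there exists a finite covering F₁, …, F_t of (Ω×Ω)∖Δ by subsets open in the subspace topology of (Ω×Ω)∖Δ such that diam(S[k](F_j)) < ε for every j ∈ {1, …, t} and every k ∈ K. -/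

import Mathlib

/-- The set of Hölder quotients of `g` on `cl Ω`, with exponent `α`. -/
def holderSet {n : ℕ} (Ω : Set (EuclideanSpace ℝ (Fin n))) (α : ℝ)
    (g : EuclideanSpace ℝ (Fin n) → ℝ) : Set ℝ :=
  {r | ∃ x ∈ closure Ω, ∃ y ∈ closure Ω, x ≠ y ∧ r = |g x - g y| / ‖x - y‖ ^ α}

/-- The norm `‖g‖_{0,α} = sup_{cl Ω} |g| + |g|_α` of `C^{0,α}(cl Ω)`. -/
noncomputable def norm0α {n : ℕ} (Ω : Set (EuclideanSpace ℝ (Fin n))) (α : ℝ)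
    (g : EuclideanSpace ℝ (Fin n) → ℝ) : ℝ :=
  sSup {r | ∃ x ∈ closure Ω, r = |g x|} + sSup (holderSet Ω α g)

/-- `S[g](x,y) = (g x - g y)·‖x - y‖^(-α)`. -/
noncomputable def Sfun {n : ℕ} (α : ℝ) (g : EuclideanSpace ℝ (Fin n) → ℝ) :
    EuclideanSpace ℝ (Fin n) × EuclideanSpace ℝ (Fin n) → ℝ :=
  fun p => (g p.1 - g p.2) * ‖p.1 - p.2‖ ^ (-α)

open Filter Metric Set

namespace Stmt7Aux

variable {n : ℕ} {Ω : Set (EuclideanSpace ℝ (Fin n))} {α : ℝ}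

/-- The set of values `|g x|`, `x ∈ closure Ω`. -/
def AbsSet (Ω : Set (EuclideanSpace ℝ (Fin n))) (g : EuclideanSpace ℝ (Fin n) → ℝ) : Set ℝ :=
  {r | ∃ x ∈ closure Ω, r = |g x|}

theorem norm0α_eq (g : EuclideanSpace ℝ (Fin n) → ℝ) :
    norm0α Ω α g = sSup (AbsSet Ω g) + sSup (holderSet Ω α g) := rfl

theorem holder_mem_nonneg {g : EuclideanSpace ℝ (Fin n) → ℝ} {r : ℝ}
    (hr : r ∈ holderSet Ω α g) : 0 ≤ r := by
  obtain ⟨x, -, y, -, -, rfl⟩ := hr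
  exact div_nonneg (abs_nonneg _) (Real.rpow_nonneg (norm_nonneg _) _)

theorem sSup_holder_nonneg (g : EuclideanSpace ℝ (Fin n) → ℝ) :
    0 ≤ sSup (holderSet Ω α g) :=
  Real.sSup_nonneg fun _ hr => holder_mem_nonneg hr

theorem absSet_nonneg (g : EuclideanSpace ℝ (Fin n) → ℝ) : 0 ≤ sSup (AbsSet Ω g) :=
  Real.sSup_nonneg fun _ hr => by obtain ⟨x, -, rfl⟩ := hr; exact abs_nonneg _

theorem bddAbove_absSet (hΩb : Bornology.IsBounded Ω) {g : EuclideanSpace ℝ (Fin n) → ℝ}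
    (hg : ContinuousOn g (closure Ω)) : BddAbove (AbsSet Ω g) := by
  have hc : IsCompact ((fun x => |g x|) '' closure Ω) :=
    hΩb.isCompact_closure.image_of_continuousOn hg.abs
  have : AbsSet Ω g = (fun x => |g x|) '' closure Ω := by
    ext r; constructor
    · rintro ⟨x, hx, rfl⟩; exact ⟨x, hx, rfl⟩
    · rintro ⟨x, hx, rfl⟩; exact ⟨x, hx, rfl⟩
  rw [this]
  exact hc.isBounded.bddAbove

theorem abs_le_sSup_absSet {g : EuclideanSpace ℝ (Fin n) → ℝ} {x : EuclideanSpace ℝ (Fin n)}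
    (hx : x ∈ closure Ω) (hb : BddAbove (AbsSet Ω g)) : |g x| ≤ sSup (AbsSet Ω g) :=
  le_csSup hb ⟨x, hx, rfl⟩

theorem abs_le_norm0α {g : EuclideanSpace ℝ (Fin n) → ℝ} {x : EuclideanSpace ℝ (Fin n)}
    (hx : x ∈ closure Ω) (hb : BddAbove (AbsSet Ω g)) : |g x| ≤ norm0α Ω α g := by
  rw [norm0α_eq]
  have := sSup_holder_nonneg (Ω := Ω) (α := α) g
  linarith [abs_le_sSup_absSet hx hb]

theorem norm0α_nonneg (g : EuclideanSpace ℝ (Fin n) → ℝ) : 0 ≤ norm0α Ω α g := by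
  rw [norm0α_eq]
  linarith [sSup_holder_nonneg (Ω := Ω) (α := α) g, absSet_nonneg (Ω := Ω) g]

theorem rpow_pos_of_ne {x y : EuclideanSpace ℝ (Fin n)} (hxy : x ≠ y) :
    0 < ‖x - y‖ ^ α :=
  Real.rpow_pos_of_pos (by rwa [norm_pos_iff, sub_ne_zero]) _

/-- quotient ≤ sSup of holderSet -/
theorem quot_le_sSup {g : EuclideanSpace ℝ (Fin n) → ℝ} (hb : BddAbove (holderSet Ω α g))
    {x y : EuclideanSpace ℝ (Fin n)} (hx : x ∈ closure Ω) (hy : y ∈ closure Ω) (hxy : x ≠ y) :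
    |g x - g y| / ‖x - y‖ ^ α ≤ sSup (holderSet Ω α g) :=
  le_csSup hb ⟨x, hx, y, hy, hxy, rfl⟩

theorem abs_sub_le_holder (hα : 0 < α) {g : EuclideanSpace ℝ (Fin n) → ℝ}
    (hb : BddAbove (holderSet Ω α g)) {x y : EuclideanSpace ℝ (Fin n)}
    (hx : x ∈ closure Ω) (hy : y ∈ closure Ω) :
    |g x - g y| ≤ sSup (holderSet Ω α g) * ‖x - y‖ ^ α := by
  rcases eq_or_ne x y with rfl | hxy
  · simp [Real.zero_rpow hα.ne']
  · rw [← div_le_iff₀ (rpow_pos_of_ne hxy)] at *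
    exact quot_le_sSup hb hx hy hxy

/-- Elements of the holder set are bounded by `C` if `|g x - g y| ≤ C * ‖x-y‖^α`. -/
theorem holder_le_of_forall {g : EuclideanSpace ℝ (Fin n) → ℝ} {C : ℝ}
    (h : ∀ x ∈ closure Ω, ∀ y ∈ closure Ω, |g x - g y| ≤ C * ‖x - y‖ ^ α) :
    ∀ r ∈ holderSet Ω α g, r ≤ C := by
  rintro r ⟨x, hx, y, hy, hxy, rfl⟩
  rw [div_le_iff₀ (rpow_pos_of_ne hxy)]
  exact h x hx y hy

theorem bddAbove_holder_sub (hα : 0 < α) {f g : EuclideanSpace ℝ (Fin n) → ℝ}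
    (hf : BddAbove (holderSet Ω α f)) (hg : BddAbove (holderSet Ω α g)) :
    BddAbove (holderSet Ω α (fun x => f x - g x)) := by
  refine ⟨sSup (holderSet Ω α f) + sSup (holderSet Ω α g), ?_⟩
  rintro r ⟨x, hx, y, hy, hxy, rfl⟩
  rw [div_le_iff₀ (rpow_pos_of_ne hxy)]
  have h1 := abs_sub_le_holder hα hf hx hy
  have h2 := abs_sub_le_holder hα hg hx hy
  calc |f x - g x - (f y - g y)| = |(f x - f y) + -(g x - g y)| := by ring_nf
    _ ≤ |f x - f y| + |g x - g y| := by
        refine (abs_add_le _ _).trans ?_; rw [abs_neg]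
    _ ≤ _ := by rw [add_mul]; exact add_le_add h1 h2

end Stmt7Aux
namespace Stmt7Aux

variable {n : ℕ} {Ω : Set (EuclideanSpace ℝ (Fin n))} {α : ℝ}

theorem Sfun_abs (hα : 0 < α) (g : EuclideanSpace ℝ (Fin n) → ℝ)
    (p : EuclideanSpace ℝ (Fin n) × EuclideanSpace ℝ (Fin n)) :
    |Sfun α g p| = |g p.1 - g p.2| / ‖p.1 - p.2‖ ^ α := by
  rw [Sfun, abs_mul, Real.rpow_neg (norm_nonneg _), div_eq_mul_inv,
    abs_of_nonneg (inv_nonneg.2 (Real.rpow_nonneg (norm_nonneg _) _))]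

theorem Sfun_sub (f g : EuclideanSpace ℝ (Fin n) → ℝ)
    (p : EuclideanSpace ℝ (Fin n) × EuclideanSpace ℝ (Fin n)) :
    Sfun α (fun x => f x - g x) p = Sfun α f p - Sfun α g p := by
  simp only [Sfun]; ring

theorem abs_Sfun_le_sSup (hα : 0 < α) {g : EuclideanSpace ℝ (Fin n) → ℝ}
    (hb : BddAbove (holderSet Ω α g))
    {p : EuclideanSpace ℝ (Fin n) × EuclideanSpace ℝ (Fin n)}
    (h1 : p.1 ∈ closure Ω) (h2 : p.2 ∈ closure Ω) :
    |Sfun α g p| ≤ sSup (holderSet Ω α g) := by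
  rw [Sfun_abs hα]
  rcases eq_or_ne p.1 p.2 with he | hne
  · rw [he]; simpa using sSup_holder_nonneg (Ω := Ω) (α := α) g
  · exact quot_le_sSup hb h1 h2 hne

/-- Triangle inequality for `norm0α` on differences. -/
theorem norm0α_triangle (hα : 0 < α) (hΩb : Bornology.IsBounded Ω)
    {f g h : EuclideanSpace ℝ (Fin n) → ℝ}
    (hfc : ContinuousOn f (closure Ω)) (hgc : ContinuousOn g (closure Ω))
    (hhc : ContinuousOn h (closure Ω))
    (hfb : BddAbove (holderSet Ω α f)) (hgb : BddAbove (holderSet Ω α g))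
    (hhb : BddAbove (holderSet Ω α h)) :
    norm0α Ω α (fun x => f x - h x) ≤
      norm0α Ω α (fun x => f x - g x) + norm0α Ω α (fun x => g x - h x) := by
  have bA1 : BddAbove (AbsSet Ω (fun x => f x - g x)) :=
    bddAbove_absSet hΩb (hfc.sub hgc)
  have bA2 : BddAbove (AbsSet Ω (fun x => g x - h x)) :=
    bddAbove_absSet hΩb (hgc.sub hhc)
  have bH1 : BddAbove (holderSet Ω α (fun x => f x - g x)) := bddAbove_holder_sub hα hfb hgb
  have bH2 : BddAbove (holderSet Ω α (fun x => g x - h x)) := bddAbove_holder_sub hα hgb hhb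
  rw [norm0α_eq, norm0α_eq, norm0α_eq]
  have hA : sSup (AbsSet Ω (fun x => f x - h x)) ≤
      sSup (AbsSet Ω (fun x => f x - g x)) + sSup (AbsSet Ω (fun x => g x - h x)) := by
    refine Real.sSup_le ?_ (add_nonneg (absSet_nonneg _) (absSet_nonneg _))
    rintro r ⟨x, hx, rfl⟩
    calc |f x - h x| = |(f x - g x) + (g x - h x)| := by ring_nf
      _ ≤ |f x - g x| + |g x - h x| := abs_add_le _ _
      _ ≤ _ := add_le_add (abs_le_sSup_absSet hx bA1) (abs_le_sSup_absSet hx bA2)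
  have hH : sSup (holderSet Ω α (fun x => f x - h x)) ≤
      sSup (holderSet Ω α (fun x => f x - g x)) + sSup (holderSet Ω α (fun x => g x - h x)) := by
    refine Real.sSup_le ?_ (add_nonneg (sSup_holder_nonneg _) (sSup_holder_nonneg _))
    rintro r ⟨x, hx, y, hy, hxy, rfl⟩
    rw [div_le_iff₀ (rpow_pos_of_ne hxy)]
    have h1 := abs_sub_le_holder hα bH1 hx hy
    have h2 := abs_sub_le_holder hα bH2 hx hy
    calc |f x - h x - (f y - h y)|
        = |((f x - g x) - (f y - g y)) + ((g x - h x) - (g y - h y))| := by ring_nf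
      _ ≤ |(f x - g x) - (f y - g y)| + |(g x - h x) - (g y - h y)| := abs_add_le _ _
      _ ≤ _ := by rw [add_mul]; exact add_le_add h1 h2
  linarith

theorem norm0α_neg (f g : EuclideanSpace ℝ (Fin n) → ℝ) :
    norm0α Ω α (fun x => f x - g x) = norm0α Ω α (fun x => g x - f x) := by
  rw [norm0α_eq, norm0α_eq]
  congr 2
  · ext r
    constructor <;> (rintro ⟨x, hx, rfl⟩; exact ⟨x, hx, (abs_sub_comm _ _).symm⟩)
  · ext r
    constructor <;>
      (rintro ⟨x, hx, y, hy, hxy, rfl⟩;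
       refine ⟨x, hx, y, hy, hxy, ?_⟩;
       congr 1;
       rw [abs_sub_comm];
       ring_nf)

/-- Extend a Hölder-type bound from `Ω` to its closure, by continuity. -/
theorem extend_closure (hα : 0 < α) {g : EuclideanSpace ℝ (Fin n) → ℝ}
    (hg : ContinuousOn g (closure Ω)) {C : ℝ}
    (h : ∀ x ∈ Ω, ∀ y ∈ Ω, |g x - g y| ≤ C * ‖x - y‖ ^ α) :
    ∀ x ∈ closure Ω, ∀ y ∈ closure Ω, |g x - g y| ≤ C * ‖x - y‖ ^ α := by
  intro x hx y hy
  obtain ⟨xs, hxs, hxl⟩ := mem_closure_iff_seq_limit.1 hx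
  obtain ⟨ys, hys, hyl⟩ := mem_closure_iff_seq_limit.1 hy
  have hgx : Tendsto (fun m => g (xs m)) atTop (nhds (g x)) :=
    ((hg x hx).tendsto).comp
      (tendsto_nhdsWithin_of_tendsto_nhds_of_eventually_within _ hxl
        (Eventually.of_forall fun m => subset_closure (hxs m)))
  have hgy : Tendsto (fun m => g (ys m)) atTop (nhds (g y)) :=
    ((hg y hy).tendsto).comp
      (tendsto_nhdsWithin_of_tendsto_nhds_of_eventually_within _ hyl
        (Eventually.of_forall fun m => subset_closure (hys m)))
  have hL : Tendsto (fun m => |g (xs m) - g (ys m)|) atTop (nhds |g x - g y|) :=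
    (hgx.sub hgy).abs
  have hnorm : Tendsto (fun m => ‖xs m - ys m‖) atTop (nhds ‖x - y‖) :=
    (hxl.sub hyl).norm
  have hR : Tendsto (fun m => C * ‖xs m - ys m‖ ^ α) atTop (nhds (C * ‖x - y‖ ^ α)) := by
    refine Tendsto.const_mul _ ?_
    exact (Real.continuousAt_rpow_const _ _ (Or.inr hα.le)).tendsto.comp hnorm
  exact le_of_tendsto_of_tendsto' hL hR fun m => h _ (hxs m) _ (hys m)

end Stmt7Aux
namespace Stmt7Aux

variable {n : ℕ} {Ω : Set (EuclideanSpace ℝ (Fin n))} {α : ℝ}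

theorem ascoli_helper (hα : 0 < α) (hΩb : Bornology.IsBounded Ω)
    {C M : ℝ} (hM : 0 ≤ M)
    (u : ℕ → EuclideanSpace ℝ (Fin n) → ℝ)
    (hc : ∀ m, ContinuousOn (u m) (closure Ω))
    (hb : ∀ m, ∀ x ∈ closure Ω, |u m x| ≤ C)
    (hh : ∀ m, ∀ x ∈ closure Ω, ∀ y ∈ closure Ω, |u m x - u m y| ≤ M * ‖x - y‖ ^ α) :
    ∃ φ : ℕ → ℕ, StrictMono φ ∧ ∃ k : EuclideanSpace ℝ (Fin n) → ℝ,
      ContinuousOn k (closure Ω) ∧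
      (∀ x ∈ closure Ω, ∀ y ∈ closure Ω, |k x - k y| ≤ M * ‖x - y‖ ^ α) ∧
      ∀ ε : ℝ, 0 < ε → ∃ N, ∀ m ≥ N, ∀ x ∈ closure Ω, |u (φ m) x - k x| ≤ ε := by
  classical
  haveI : CompactSpace (closure Ω) := isCompact_iff_compactSpace.1 hΩb.isCompact_closure
  set cΩ := closure Ω with hcΩ
  -- bundle as bounded continuous functions
  have hdist : ∀ m (x y : cΩ), dist (u m x) (u m y) ≤ 2 * |C| := by
    intro m x y
    rw [Real.dist_eq]
    have h1 := hb m x x.2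
    have h2 := hb m y y.2
    have := abs_sub_abs_le_abs_sub (u m x) (u m y)
    calc |u m x - u m y| ≤ |u m x| + |u m y| := abs_sub _ _
      _ ≤ 2 * |C| := by
        have := le_abs_self C
        linarith
  let G : ℕ → BoundedContinuousFunction cΩ ℝ := fun m =>
    BoundedContinuousFunction.mkOfBound ⟨fun x => u m x, (hc m).restrict⟩ (2 * |C|) (hdist m)
  -- the Hölder class
  set A : Set (BoundedContinuousFunction cΩ ℝ) :=
    {f | (∀ x : cΩ, |f x| ≤ C) ∧
      ∀ x y : cΩ, |f x - f y| ≤ M * ‖(x : EuclideanSpace ℝ (Fin n)) - y‖ ^ α} with hA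
  have hGA : ∀ m, G m ∈ A := fun m =>
    ⟨fun x => hb m x x.2, fun x y => hh m x x.2 y y.2⟩
  have hsub : ∀ (x y : cΩ), ‖(x : EuclideanSpace ℝ (Fin n)) - y‖ = dist x y := by
    intro x y
    rw [Subtype.dist_eq, dist_eq_norm]
  have hequi : Equicontinuous (fun f : A => (f : cΩ → ℝ)) := by
    intro x₀
    rw [equicontinuousAt_iff]
    intro ε hε
    refine ⟨(ε / (2 * (M + 1))) ^ (1 / α), Real.rpow_pos_of_pos (by positivity) _, ?_⟩
    intro x hx f
    obtain ⟨f, hfA⟩ := f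
    rw [Real.dist_eq]
    show |f x₀ - f x| < ε
    have h1 : |f x₀ - f x| ≤ M * ‖(x₀ : EuclideanSpace ℝ (Fin n)) - x‖ ^ α := hfA.2 x₀ x
    have h2 : ‖(x₀ : EuclideanSpace ℝ (Fin n)) - x‖ ^ α ≤ ((ε / (2 * (M + 1))) ^ (1 / α)) ^ α := by
      refine Real.rpow_le_rpow (norm_nonneg _) ?_ hα.le
      rw [hsub, dist_comm]
      exact hx.le
    have h3 : ((ε / (2 * (M + 1))) ^ (1 / α)) ^ α = ε / (2 * (M + 1)) := by
      rw [← Real.rpow_mul (by positivity), one_div, inv_mul_cancel₀ hα.ne', Real.rpow_one]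
    calc |f x₀ - f x| ≤ M * ((ε / (2 * (M + 1))) ^ (1 / α)) ^ α := by
          refine h1.trans ?_
          exact mul_le_mul_of_nonneg_left h2 hM
      _ = M * (ε / (2 * (M + 1))) := by rw [h3]
      _ < ε := by
          rw [div_eq_inv_mul, ← mul_assoc]
          have hlt : M * (2 * (M + 1))⁻¹ < 1 := by
            rw [mul_inv_lt_iff₀ (by positivity)]
            nlinarith
          nlinarith
  have hcpt : IsCompact (closure A) := by
    refine BoundedContinuousFunction.arzela_ascoli (Icc (-|C|) |C|) isCompact_Icc A ?_ hequi
    intro f x hf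
    have := hf.1 x
    have hC := le_abs_self C
    constructor <;> [skip; skip] <;> cases' abs_le.1 this with h1 h2 <;> linarith
  obtain ⟨f, hfcl, φ, hφ, hconv⟩ := hcpt.tendsto_subseq (fun m => subset_closure (hGA m))
  -- the limit function, extended to the whole space
  refine ⟨φ, hφ, fun x => if hx : x ∈ cΩ then f ⟨x, hx⟩ else 0, ?_, ?_, ?_⟩
  · rw [continuousOn_iff_continuous_restrict]
    have : cΩ.domRestrict (fun x => if hx : x ∈ cΩ then f ⟨x, hx⟩ else 0) = ⇑f := by
      funext x
      simp only [Set.domRestrict_apply, dif_pos x.2]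
    rw [this]
    exact f.continuous
  · intro x hx y hy
    simp only [dif_pos hx, dif_pos hy]
    refine le_of_forall_pos_le_add ?_
    intro δ hδ
    obtain ⟨g, hgA, hfg⟩ := Metric.mem_closure_iff.1 hfcl (δ / 2) (by positivity)
    have d1 : |f ⟨x, hx⟩ - g ⟨x, hx⟩| < δ / 2 := by
      rw [← Real.dist_eq]
      exact lt_of_le_of_lt (BoundedContinuousFunction.dist_coe_le_dist _) hfg
    have d2 : |f ⟨y, hy⟩ - g ⟨y, hy⟩| < δ / 2 := by
      rw [← Real.dist_eq]
      exact lt_of_le_of_lt (BoundedContinuousFunction.dist_coe_le_dist _) hfg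
    have hg := hgA.2 ⟨x, hx⟩ ⟨y, hy⟩
    calc |f ⟨x, hx⟩ - f ⟨y, hy⟩|
        = |(f ⟨x, hx⟩ - g ⟨x, hx⟩) + (g ⟨x, hx⟩ - g ⟨y, hy⟩) + (g ⟨y, hy⟩ - f ⟨y, hy⟩)| := by
          ring_nf
      _ ≤ |f ⟨x, hx⟩ - g ⟨x, hx⟩| + |g ⟨x, hx⟩ - g ⟨y, hy⟩| + |g ⟨y, hy⟩ - f ⟨y, hy⟩| :=
          abs_add_three _ _ _
      _ ≤ M * ‖x - y‖ ^ α + δ := by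
          rw [abs_sub_comm (g ⟨y, hy⟩)] at *
          have : |g ⟨x, hx⟩ - g ⟨y, hy⟩| ≤ M * ‖x - y‖ ^ α := hg
          linarith
  · intro ε hε
    have := (Metric.tendsto_atTop.1 hconv) ε hε
    obtain ⟨N, hN⟩ := this
    refine ⟨N, fun m hm x hx => ?_⟩
    have hd := hN m hm
    have : dist ((G ∘ φ) m ⟨x, hx⟩) (f ⟨x, hx⟩) ≤ dist ((G ∘ φ) m) f :=
      BoundedContinuousFunction.dist_coe_le_dist _
    simp only [dif_pos hx]
    have he : (G ∘ φ) m ⟨x, hx⟩ = u (φ m) x := rfl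
    rw [Function.comp] at this
    calc |u (φ m) x - f ⟨x, hx⟩| = dist ((G ∘ φ) m ⟨x, hx⟩) (f ⟨x, hx⟩) := by
          rw [Real.dist_eq, he]
      _ ≤ _ := this
      _ ≤ ε := hd.le

end Stmt7Aux

open Stmt7Aux

/-- **Theorem 2.4.** For `Ω ⊆ ℝⁿ` bounded open, `α ∈ (0,1]` and `K ⊆ C^{0,α}(cl Ω)`:
`K` is relatively compact in `(C^{0,α}(cl Ω), ‖·‖_{0,α})` iff `K` is pointwise relatively
compact on `Ω` and for every `ε > 0` there is a finite covering of `(Ω×Ω)∖Δ` by relatively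
open subsets on each of which every `S[k]`, `k ∈ K`, has oscillation `< ε`. -/
theorem stmt_7 (n : ℕ) (Ω : Set (EuclideanSpace ℝ (Fin n)))
    (hΩo : IsOpen Ω) (hΩb : Bornology.IsBounded Ω)
    (α : ℝ) (hα : α ∈ Set.Ioc (0 : ℝ) 1)
    (K : Set (EuclideanSpace ℝ (Fin n) → ℝ))
    (hK : ∀ k ∈ K, ContinuousOn k (closure Ω) ∧ BddAbove (holderSet Ω α k)) :
    (∀ u : ℕ → EuclideanSpace ℝ (Fin n) → ℝ, (∀ j, u j ∈ K) →
      ∃ φ : ℕ → ℕ, StrictMono φ ∧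
        ∃ k : EuclideanSpace ℝ (Fin n) → ℝ,
          (ContinuousOn k (closure Ω) ∧ BddAbove (holderSet Ω α k)) ∧
          Filter.Tendsto (fun j => norm0α Ω α (fun x => u (φ j) x - k x))
            Filter.atTop (nhds 0)) ↔
    ((∀ x ∈ Ω, IsCompact (closure {y : ℝ | ∃ k ∈ K, k x = y})) ∧
      ∀ ε : ℝ, 0 < ε →
        ∃ (t : ℕ) (F : Fin t → Set (EuclideanSpace ℝ (Fin n) × EuclideanSpace ℝ (Fin n))),
          (∀ j, ∃ U, IsOpen U ∧
            F j = U ∩ ((Ω ×ˢ Ω) \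
              {p : EuclideanSpace ℝ (Fin n) × EuclideanSpace ℝ (Fin n) | p.1 = p.2})) ∧
          ((Ω ×ˢ Ω) \ {p : EuclideanSpace ℝ (Fin n) × EuclideanSpace ℝ (Fin n) | p.1 = p.2})
            ⊆ ⋃ j, F j ∧
          ∀ j, ∀ k ∈ K, Metric.diam (Sfun α k '' F j) < ε) := by
  classical
  obtain ⟨hα0, hα1⟩ := hα
  set D : Set (EuclideanSpace ℝ (Fin n) × EuclideanSpace ℝ (Fin n)) :=
    (Ω ×ˢ Ω) \ {p : EuclideanSpace ℝ (Fin n) × EuclideanSpace ℝ (Fin n) | p.1 = p.2} with hD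
  have hDopen : IsOpen D := (hΩo.prod hΩo).sdiff (isClosed_eq continuous_fst continuous_snd)
  have hDmem : ∀ p : EuclideanSpace ℝ (Fin n) × EuclideanSpace ℝ (Fin n),
      p ∈ D ↔ (p.1 ∈ Ω ∧ p.2 ∈ Ω) ∧ p.1 ≠ p.2 := by
    intro p; rw [hD]; simp [Set.mem_prod]
  -- continuity of `Sfun` on `D`
  have hScont : ∀ k : EuclideanSpace ℝ (Fin n) → ℝ, ContinuousOn k (closure Ω) →
      ContinuousOn (Sfun α k) D := by
    intro k hk
    have h1 : ContinuousOn (fun p : EuclideanSpace ℝ (Fin n) × EuclideanSpace ℝ (Fin n) =>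
        k p.1 - k p.2) D := by
      refine ContinuousOn.sub ?_ ?_
      · exact hk.comp continuous_fst.continuousOn fun p hp =>
          subset_closure ((hDmem p).1 hp).1.1
      · exact hk.comp continuous_snd.continuousOn fun p hp =>
          subset_closure ((hDmem p).1 hp).1.2
    have h2 : ContinuousOn (fun p : EuclideanSpace ℝ (Fin n) × EuclideanSpace ℝ (Fin n) =>
        ‖p.1 - p.2‖ ^ (-α)) D := by
      intro p hp
      refine ContinuousAt.continuousWithinAt ?_
      have hne : ‖p.1 - p.2‖ ≠ 0 := by
        rw [norm_ne_zero_iff, sub_ne_zero]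
        exact ((hDmem p).1 hp).2
      exact ContinuousAt.rpow_const
        ((continuous_fst.sub continuous_snd).norm.continuousAt) (Or.inl hne)
    exact h1.mul h2
  constructor
  · intro hseq
    constructor
    · -- pointwise relative compactness
      intro x hx
      refine isCompact_of_isClosed_isBounded isClosed_closure ?_
      refine Bornology.IsBounded.closure ?_
      by_contra hun
      rw [isBounded_iff_forall_norm_le] at hun
      push_neg at hun
      have hch : ∀ j : ℕ, ∃ k, k ∈ K ∧ (j : ℝ) < ‖k x‖ := by
        intro j
        obtain ⟨y, ⟨k, hk, rfl⟩, hy⟩ := hun j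
        exact ⟨k, hk, hy⟩
      choose u huK hub using hch
      obtain ⟨φ, hφ, k, ⟨hkc, hkb⟩, htend⟩ := hseq u huK
      obtain ⟨N, hN⟩ := Metric.tendsto_atTop.1 htend 1 one_pos
      set j := max N ⌈1 + |k x|⌉₊ with hj
      have h1 : norm0α Ω α (fun y => u (φ j) y - k y) < 1 := by
        have := hN j (le_max_left _ _)
        rw [Real.dist_eq, sub_zero] at this
        exact lt_of_le_of_lt (le_abs_self _) this
      have h2 : |u (φ j) x - k x| ≤ norm0α Ω α (fun y => u (φ j) y - k y) :=
        abs_le_norm0α (subset_closure hx)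
          (bddAbove_absSet hΩb (((hK _ (huK (φ j))).1).sub hkc))
      have h3 : (j : ℝ) < ‖u (φ j) x‖ := lt_of_le_of_lt (by exact_mod_cast hφ.le_apply) (hub (φ j))
      have h4 : (1 : ℝ) + |k x| ≤ j := le_trans (Nat.le_ceil _) (by exact_mod_cast le_max_right N _)
      rw [Real.norm_eq_abs] at h3
      have h5 : |u (φ j) x| ≤ |u (φ j) x - k x| + |k x| := by
        calc |u (φ j) x| = |(u (φ j) x - k x) + k x| := by ring_nf
          _ ≤ _ := abs_add_le _ _
      linarith
    · -- covering condition
      intro ε hε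
      -- Step 1: a finite δ-net inside K, for every δ > 0
      have hnet : ∀ δ : ℝ, 0 < δ → ∃ (m : ℕ) (v : Fin m → (EuclideanSpace ℝ (Fin n) → ℝ)),
          (∀ i, v i ∈ K) ∧ ∀ k ∈ K, ∃ i, norm0α Ω α (fun x => k x - v i x) < δ := by
        intro δ hδ
        by_contra hno
        push_neg at hno
        have hch : ∀ (m : ℕ) (v : Fin m → (EuclideanSpace ℝ (Fin n) → ℝ)),
            ∃ k, (∀ i, v i ∈ K) →
              k ∈ K ∧ ∀ i, δ ≤ norm0α Ω α (fun x => k x - v i x) := by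
          intro m v
          by_cases h : ∀ i, v i ∈ K
          · obtain ⟨k, hk, hsep⟩ := hno m v h
            exact ⟨k, fun _ => ⟨hk, hsep⟩⟩
          · exact ⟨0, fun hc => absurd hc h⟩
        choose f hf using hch
        -- build a δ-separated sequence
        let v : (m : ℕ) → Fin m → (EuclideanSpace ℝ (Fin n) → ℝ) := fun m =>
          Nat.rec (motive := fun m => Fin m → (EuclideanSpace ℝ (Fin n) → ℝ))
            (fun i => i.elim0) (fun m vm => Fin.snoc vm (f m vm)) m
        let u : ℕ → (EuclideanSpace ℝ (Fin n) → ℝ) := fun m => f m (v m)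
        have hvsucc : ∀ m, v (m + 1) = Fin.snoc (v m) (u m) := fun m => rfl
        have hvval : ∀ m (i : Fin m), v m i = u i.1 := by
          intro m
          induction m with
          | zero => exact fun i => i.elim0
          | succ m ih =>
            intro i
            rcases lt_or_eq_of_le (Nat.lt_succ_iff.1 i.2) with h | h
            · have : i = Fin.castSucc ⟨i.1, h⟩ := by
                apply Fin.ext; rfl
              rw [hvsucc, this, Fin.snoc_castSucc]
              exact ih ⟨i.1, h⟩
            · have : i = Fin.last m := by
                apply Fin.ext; exact h
              rw [hvsucc, this, Fin.snoc_last]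
              rfl
        have hmem : ∀ m, u m ∈ K ∧ ∀ i, δ ≤ norm0α Ω α (fun x => u m x - v m i x) := by
          intro m
          induction m using Nat.strong_induction_on with
          | _ m ih =>
            refine hf m (v m) ?_
            intro i
            rw [hvval m i]
            exact (ih i.1 i.2).1
        have hsep : ∀ i m : ℕ, i < m → δ ≤ norm0α Ω α (fun x => u m x - u i x) := by
          intro i m him
          have := (hmem m).2 ⟨i, him⟩
          rwa [hvval m ⟨i, him⟩] at this
        obtain ⟨φ, hφ, k, ⟨hkc, hkb⟩, htend⟩ := hseq u fun m => (hmem m).1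
        obtain ⟨N, hN⟩ := Metric.tendsto_atTop.1 htend (δ / 2) (by positivity)
        have hb1 : norm0α Ω α (fun x => u (φ (N + 1)) x - k x) < δ / 2 := by
          have := hN (N + 1) (Nat.le_succ N)
          rw [Real.dist_eq, sub_zero] at this
          exact lt_of_le_of_lt (le_abs_self _) this
        have hb2 : norm0α Ω α (fun x => u (φ N) x - k x) < δ / 2 := by
          have := hN N le_rfl
          rw [Real.dist_eq, sub_zero] at this
          exact lt_of_le_of_lt (le_abs_self _) this
        have htri : norm0α Ω α (fun x => u (φ (N + 1)) x - u (φ N) x) ≤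
            norm0α Ω α (fun x => u (φ (N + 1)) x - k x) +
            norm0α Ω α (fun x => k x - u (φ N) x) :=
          norm0α_triangle hα0 hΩb (hK _ (hmem (φ (N + 1))).1).1 hkc (hK _ (hmem (φ N)).1).1
            (hK _ (hmem (φ (N + 1))).1).2 hkb (hK _ (hmem (φ N)).1).2
        rw [norm0α_neg (Ω := Ω) (α := α) k (u (φ N))] at htri
        have := hsep (φ N) (φ (N + 1)) (hφ (Nat.lt_succ_self N))
        linarith
      -- Step 2: build the covering from the ε/8-net
      obtain ⟨m, v, hvK, hvnet⟩ := hnet (ε / 8) (by positivity)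
      set R : ℝ := 1 + ∑ i : Fin m, sSup (holderSet Ω α (v i)) with hR
      have hRb : ∀ (i : Fin m) (p : EuclideanSpace ℝ (Fin n) × EuclideanSpace ℝ (Fin n)),
          p.1 ∈ closure Ω → p.2 ∈ closure Ω → |Sfun α (v i) p| < R := by
        intro i p h1 h2
        have hb := abs_Sfun_le_sSup hα0 (hK _ (hvK i)).2 h1 h2
        have hsum : sSup (holderSet Ω α (v i)) ≤ ∑ i : Fin m, sSup (holderSet Ω α (v i)) :=
          Finset.single_le_sum (fun i _ => sSup_holder_nonneg (v i)) (Finset.mem_univ i)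
        rw [hR]; linarith
      have hRpos : 0 < R := by
        rw [hR]
        have : (0:ℝ) ≤ ∑ i : Fin m, sSup (holderSet Ω α (v i)) :=
          Finset.sum_nonneg fun i _ => sSup_holder_nonneg (v i)
        linarith
      set N' : ℕ := ⌈16 * R / ε⌉₊ with hN'
      set J : Fin (N' + 1) → Set ℝ := fun l =>
        Set.Ioo (-R + l * (ε / 8) - ε / 8) (-R + l * (ε / 8) + ε / 8) with hJ
      have hJcov : ∀ s : ℝ, |s| < R → ∃ l : Fin (N' + 1), s ∈ J l := by
        intro s hs
        obtain ⟨hs1, hs2⟩ := abs_lt.1 hs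
        have hsR : 0 ≤ s + R := by linarith
        have hp8 : (0:ℝ) < ε / 8 := by positivity
        set l0 : ℕ := ⌊(s + R) / (ε / 8)⌋₊ with hl0
        have hfl : (l0 : ℝ) ≤ (s + R) / (ε / 8) := Nat.floor_le (by positivity)
        have hfl2 : (s + R) / (ε / 8) < l0 + 1 := Nat.lt_floor_add_one _
        have hle : l0 ≤ N' := by
          have h1 : (l0 : ℝ) ≤ 16 * R / ε := by
            refine hfl.trans ?_
            rw [div_le_div_iff₀ hp8 hε]
            nlinarith
          have h2 : (16 * R / ε : ℝ) ≤ N' := Nat.le_ceil _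
          exact_mod_cast h1.trans h2
        refine ⟨⟨l0, Nat.lt_succ_of_le hle⟩, ?_⟩
        have hm1 : (l0 : ℝ) * (ε / 8) ≤ s + R := (le_div_iff₀ hp8).1 hfl
        have hm2 : s + R < ((l0 : ℝ) + 1) * (ε / 8) := (div_lt_iff₀ hp8).1 hfl2
        constructor
        · simp only []
          nlinarith
        · simp only []
          nlinarith
      -- the open pieces
      set W : Fin m → Fin (N' + 1) →
          Set (EuclideanSpace ℝ (Fin n) × EuclideanSpace ℝ (Fin n)) := fun i l =>
        D ∩ (Sfun α (v i)) ⁻¹' (J l) with hW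
      have hWopen : ∀ i l, IsOpen (W i l) :=
        fun i l => (hScont (v i) (hK _ (hvK i)).1).isOpen_inter_preimage hDopen isOpen_Ioo
      set I := Fin m → Fin (N' + 1)
      set e : Fin (Fintype.card I) ≃ I := (Fintype.equivFin I).symm with he
      refine ⟨Fintype.card I, fun j => (⋂ i : Fin m, W i (e j i)) ∩ D, ?_, ?_, ?_⟩
      · intro j
        exact ⟨⋂ i : Fin m, W i (e j i), isOpen_iInter_of_finite fun i => hWopen _ _, rfl⟩
      · intro p hp
        have hmemD : p ∈ D := hp
        have hSb : ∀ i : Fin m, |Sfun α (v i) p| < R := fun i =>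
          hRb i p (subset_closure ((hDmem p).1 hmemD).1.1)
            (subset_closure ((hDmem p).1 hmemD).1.2)
        have : ∀ i : Fin m, ∃ l, Sfun α (v i) p ∈ J l := fun i => hJcov _ (hSb i)
        choose σ hσ using this
        refine Set.mem_iUnion.2 ⟨e.symm σ, ?_, hmemD⟩
        refine Set.mem_iInter.2 fun i => ?_
        rw [Equiv.apply_symm_apply]
        exact ⟨hmemD, hσ i⟩
      · intro j k hk
        obtain ⟨i, hi⟩ := hvnet k hk
        refine lt_of_le_of_lt (Metric.diam_le_of_forall_dist_le (by positivity : (0:ℝ) ≤ ε / 2) ?_)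
          (by linarith)
        rintro a ⟨p, hp, rfl⟩ b ⟨q, hq, rfl⟩
        have hpW : p ∈ W i (e j i) := (Set.mem_iInter.1 hp.1) i
        have hqW : q ∈ W i (e j i) := (Set.mem_iInter.1 hq.1) i
        have hpD : p ∈ D := hp.2
        have hqD : q ∈ D := hq.2
        -- |S k p - S (v i) p| ≤ ε/8 etc.
        have hdiffb : ∀ r : EuclideanSpace ℝ (Fin n) × EuclideanSpace ℝ (Fin n), r ∈ D →
            |Sfun α k r - Sfun α (v i) r| ≤ ε / 8 := by
          intro r hr
          rw [← Sfun_sub]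
          have hb : BddAbove (holderSet Ω α (fun x => k x - v i x)) :=
            bddAbove_holder_sub hα0 (hK _ hk).2 (hK _ (hvK i)).2
          have h1 := abs_Sfun_le_sSup hα0 hb
            (subset_closure ((hDmem r).1 hr).1.1) (subset_closure ((hDmem r).1 hr).1.2)
          have h2 : sSup (holderSet Ω α (fun x => k x - v i x)) ≤
              norm0α Ω α (fun x => k x - v i x) := by
            rw [norm0α_eq]
            linarith [absSet_nonneg (Ω := Ω) (fun x => k x - v i x)]
          linarith
        have hmid : |Sfun α (v i) p - Sfun α (v i) q| ≤ ε / 4 := by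
          have hp' := hpW.2
          have hq' := hqW.2
          simp only [hJ, Set.mem_preimage, Set.mem_Ioo] at hp' hq'
          rw [abs_sub_le_iff]
          constructor <;> linarith [hp'.1, hp'.2, hq'.1, hq'.2]
        rw [Real.dist_eq]
        have h1 := hdiffb p hpD
        have h2 := hdiffb q hqD
        calc |Sfun α k p - Sfun α k q|
            = |(Sfun α k p - Sfun α (v i) p) + (Sfun α (v i) p - Sfun α (v i) q)
              + (Sfun α (v i) q - Sfun α k q)| := by ring_nf
          _ ≤ |Sfun α k p - Sfun α (v i) p| + |Sfun α (v i) p - Sfun α (v i) q|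
              + |Sfun α (v i) q - Sfun α k q| := abs_add_three _ _ _
          _ ≤ ε / 8 + ε / 4 + ε / 8 := by
              have := hdiffb q hqD
              rw [abs_sub_comm] at this
              exact add_le_add (add_le_add h1 hmid) this
          _ = ε / 2 := by ring

  · rintro ⟨hpt, hcov⟩ u hu
    rcases Set.eq_empty_or_nonempty Ω with rfl | ⟨x₀, hx₀⟩
    · -- empty case
      refine ⟨id, strictMono_id, 0, ⟨?_, ?_⟩, ?_⟩
      · rw [closure_empty]; exact continuousOn_empty _
      · have : holderSet (∅ : Set (EuclideanSpace ℝ (Fin n))) α (0 : EuclideanSpace ℝ (Fin n) → ℝ)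
            = ∅ := by
          ext r
          simp [holderSet, closure_empty]
        rw [this]; exact bddAbove_empty
      · have hz : ∀ g : EuclideanSpace ℝ (Fin n) → ℝ,
            norm0α (∅ : Set (EuclideanSpace ℝ (Fin n))) α g = 0 := by
          intro g
          rw [norm0α_eq]
          have h1 : AbsSet (∅ : Set (EuclideanSpace ℝ (Fin n))) g = ∅ := by
            ext r
            simp [AbsSet, closure_empty]
          have h2 : holderSet (∅ : Set (EuclideanSpace ℝ (Fin n))) α g = ∅ := by
            ext r
            simp [holderSet, closure_empty]
          rw [h1, h2, Real.sSup_empty]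
          norm_num
        simp only [hz]
        exact tendsto_const_nhds
    · -- main case
      -- pointwise bounds
      have hptb : ∀ x ∈ Ω, ∃ C, 0 ≤ C ∧ ∀ k ∈ K, |k x| ≤ C := by
        intro x hx
        have hbd : Bornology.IsBounded {y : ℝ | ∃ k ∈ K, k x = y} :=
          Bornology.IsBounded.subset (hpt x hx).isBounded subset_closure
        obtain ⟨C, hC⟩ := isBounded_iff_forall_norm_le.1 hbd
        refine ⟨max C 0, le_max_right _ _, fun k hk => ?_⟩
        have := hC (k x) ⟨k, hk, rfl⟩
        rw [Real.norm_eq_abs] at this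
        exact this.trans (le_max_left _ _)
      -- uniform Hölder bound from the covering with ε = 1
      obtain ⟨t1, F1, hF1open, hF1cov, hF1diam⟩ := hcov 1 one_pos
      have hF1D : ∀ j, F1 j ⊆ D := by
        intro j
        obtain ⟨U, -, hU⟩ := hF1open j
        rw [hU]
        exact Set.inter_subset_right
      have hSbdd : ∀ k ∈ K, ∀ (s : Set (EuclideanSpace ℝ (Fin n) × EuclideanSpace ℝ (Fin n))),
          s ⊆ D → Bornology.IsBounded (Sfun α k '' s) := by
        intro k hk s hs
        rw [isBounded_iff_forall_norm_le]
        refine ⟨sSup (holderSet Ω α k), ?_⟩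
        rintro y ⟨p, hp, rfl⟩
        rw [Real.norm_eq_abs]
        exact abs_Sfun_le_sSup hα0 (hK _ hk).2
          (subset_closure ((hDmem p).1 (hs hp)).1.1) (subset_closure ((hDmem p).1 (hs hp)).1.2)
      have hc1 : ∀ j : Fin t1, ∃ c, 0 ≤ c ∧ ∀ k ∈ K, ∀ p ∈ F1 j, |Sfun α k p| ≤ c := by
        intro j
        rcases (F1 j).eq_empty_or_nonempty with he | ⟨q, hq⟩
        · exact ⟨0, le_rfl, fun k hk p hp => by rw [he] at hp; exact absurd hp (Set.notMem_empty _)⟩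
        · have hqD : q ∈ D := hF1D j hq
          obtain ⟨⟨hq1, hq2⟩, hqne⟩ := (hDmem q).1 hqD
          obtain ⟨C1, hC1n, hC1⟩ := hptb q.1 hq1
          obtain ⟨C2, hC2n, hC2⟩ := hptb q.2 hq2
          refine ⟨(C1 + C2) / ‖q.1 - q.2‖ ^ α + 1, by positivity, ?_⟩
          intro k hk p hp
          have hd : dist (Sfun α k p) (Sfun α k q) ≤
              Metric.diam (Sfun α k '' F1 j) :=
            Metric.dist_le_diam_of_mem (hSbdd k hk _ (hF1D j))
              ⟨p, hp, rfl⟩ ⟨q, hq, rfl⟩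
          have hd1 : dist (Sfun α k p) (Sfun α k q) < 1 := hd.trans_lt (hF1diam j k hk)
          have hq' : |Sfun α k q| ≤ (C1 + C2) / ‖q.1 - q.2‖ ^ α := by
            rw [Sfun_abs hα0]
            exact div_le_div_of_nonneg_right
              ((abs_sub _ _).trans (add_le_add (hC1 k hk) (hC2 k hk)))
              (rpow_pos_of_ne hqne).le
          rw [Real.dist_eq] at hd1
          calc |Sfun α k p| = |(Sfun α k p - Sfun α k q) + Sfun α k q| := by ring_nf
            _ ≤ |Sfun α k p - Sfun α k q| + |Sfun α k q| := abs_add_le _ _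
            _ ≤ _ := by linarith
      choose c hc0 hc using hc1
      set M0 : ℝ := ∑ j : Fin t1, c j with hM0def
      have hM0 : 0 ≤ M0 := Finset.sum_nonneg fun j _ => hc0 j
      have hquot : ∀ k ∈ K, ∀ x ∈ Ω, ∀ y ∈ Ω, |k x - k y| ≤ M0 * ‖x - y‖ ^ α := by
        intro k hk x hx y hy
        rcases eq_or_ne x y with rfl | hxy
        · simp [Real.zero_rpow hα0.ne']
        · have hpD : (x, y) ∈ D := (hDmem (x, y)).2 ⟨⟨hx, hy⟩, hxy⟩
          obtain ⟨j, hj⟩ := Set.mem_iUnion.1 (hF1cov hpD)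
          have h1 : |Sfun α k (x, y)| ≤ c j := hc j k hk _ hj
          have h2 : c j ≤ M0 := Finset.single_le_sum (fun j _ => hc0 j) (Finset.mem_univ j)
          rw [Sfun_abs hα0] at h1
          have := (div_le_iff₀ (rpow_pos_of_ne hxy)).1 (h1.trans h2)
          simpa using this
      have hquotc : ∀ k ∈ K, ∀ x ∈ closure Ω, ∀ y ∈ closure Ω,
          |k x - k y| ≤ M0 * ‖x - y‖ ^ α := fun k hk =>
        extend_closure hα0 (hK _ hk).1 (hquot k hk)
      -- uniform sup bound
      obtain ⟨r, hr⟩ := hΩb.closure.subset_closedBall x₀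
      have hrn : 0 ≤ r := by
        have h := hr (subset_closure hx₀)
        rw [Metric.mem_closedBall] at h
        exact le_trans dist_nonneg h
      obtain ⟨C0, hC0n, hC0⟩ := hptb x₀ hx₀
      set C : ℝ := C0 + M0 * r ^ α with hCdef
      have hCb : ∀ k ∈ K, ∀ x ∈ closure Ω, |k x| ≤ C := by
        intro k hk x hx
        have h1 : |k x - k x₀| ≤ M0 * ‖x - x₀‖ ^ α :=
          hquotc k hk x hx x₀ (subset_closure hx₀)
        have h2 : ‖x - x₀‖ ^ α ≤ r ^ α := by
          refine Real.rpow_le_rpow (norm_nonneg _) ?_ hα0.le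
          rw [← dist_eq_norm]
          exact hr hx
        calc |k x| = |(k x - k x₀) + k x₀| := by ring_nf
          _ ≤ |k x - k x₀| + |k x₀| := abs_add_le _ _
          _ ≤ M0 * r ^ α + C0 := add_le_add (h1.trans (by gcongr)) (hC0 k hk)
          _ = C := by rw [hCdef]; ring
      -- Arzelà–Ascoli
      obtain ⟨φ, hφ, k, hkc, hkh, hunif⟩ := ascoli_helper hα0 hΩb hM0 u
        (fun m => (hK _ (hu m)).1) (fun m x hx => hCb _ (hu m) x hx)
        (fun m x hx y hy => hquotc _ (hu m) x hx y hy)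
      have hkb : BddAbove (holderSet Ω α k) :=
        ⟨M0, fun r hr => holder_le_of_forall hkh r hr⟩
      refine ⟨φ, hφ, k, ⟨hkc, hkb⟩, ?_⟩
      -- pointwise convergence
      have hptconv : ∀ x ∈ closure Ω,
          Tendsto (fun m => u (φ m) x) atTop (nhds (k x)) := by
        intro x hx
        rw [Metric.tendsto_atTop]
        intro δ hδ
        obtain ⟨N, hN⟩ := hunif (δ / 2) (by positivity)
        exact ⟨N, fun m hm => by
          rw [Real.dist_eq]
          exact lt_of_le_of_lt (hN m hm x hx) (by linarith)⟩
      -- squeeze lemma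
      have hsq : ∀ a : ℕ → ℝ, (∀ j, 0 ≤ a j) → (∀ δ : ℝ, 0 < δ → ∃ N, ∀ j ≥ N, a j ≤ δ) →
          Tendsto a atTop (nhds 0) := by
        intro a h0 hb
        rw [Metric.tendsto_atTop]
        intro δ hδ
        obtain ⟨N, hN⟩ := hb (δ / 2) (by positivity)
        refine ⟨N, fun j hj => ?_⟩
        rw [Real.dist_eq, sub_zero, abs_of_nonneg (h0 j)]
        exact lt_of_le_of_lt (hN j hj) (by linarith)
      have hA : Tendsto (fun j => sSup (AbsSet Ω (fun x => u (φ j) x - k x)))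
          atTop (nhds 0) := by
        refine hsq _ (fun j => absSet_nonneg _) ?_
        intro δ hδ
        obtain ⟨N, hN⟩ := hunif δ hδ
        refine ⟨N, fun j hj => ?_⟩
        refine Real.sSup_le ?_ hδ.le
        rintro r ⟨x, hx, rfl⟩
        exact hN j hj x hx
      have hB : Tendsto (fun j => sSup (holderSet Ω α (fun x => u (φ j) x - k x)))
          atTop (nhds 0) := by
        refine hsq _ (fun j => sSup_holder_nonneg _) ?_
        intro δ hδ
        obtain ⟨t2, F2, hF2open, hF2cov, hF2diam⟩ := hcov (δ / 4) (by positivity)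
        have hF2D : ∀ j, F2 j ⊆ D := by
          intro j
          obtain ⟨U, -, hU⟩ := hF2open j
          rw [hU]
          exact Set.inter_subset_right
        -- oscillation of S[k] on each F2 j
        have hosc : ∀ (j : Fin t2), ∀ p ∈ F2 j, ∀ q ∈ F2 j,
            |Sfun α k p - Sfun α k q| ≤ δ / 4 := by
          intro j p hp q hq
          have hpD := hF2D j hp
          have hqD := hF2D j hq
          have hconv : Tendsto (fun m => |Sfun α (u (φ m)) p - Sfun α (u (φ m)) q|)
              atTop (nhds |Sfun α k p - Sfun α k q|) := by
            have h1 : Tendsto (fun m => Sfun α (u (φ m)) p) atTop (nhds (Sfun α k p)) := by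
              refine Tendsto.mul_const _ ?_
              exact (hptconv p.1 (subset_closure ((hDmem p).1 hpD).1.1)).sub
                (hptconv p.2 (subset_closure ((hDmem p).1 hpD).1.2))
            have h2 : Tendsto (fun m => Sfun α (u (φ m)) q) atTop (nhds (Sfun α k q)) := by
              refine Tendsto.mul_const _ ?_
              exact (hptconv q.1 (subset_closure ((hDmem q).1 hqD).1.1)).sub
                (hptconv q.2 (subset_closure ((hDmem q).1 hqD).1.2))
            exact (h1.sub h2).abs
          refine le_of_tendsto hconv (Eventually.of_forall fun m => ?_)
          have := Metric.dist_le_diam_of_mem (hSbdd _ (hu (φ m)) _ (hF2D j))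
            (Set.mem_image_of_mem _ hp) (Set.mem_image_of_mem _ hq)
          rw [Real.dist_eq] at this
          exact this.trans (hF2diam j _ (hu (φ m))).le
        -- anchors and uniform N per piece
        have hNj : ∀ j : Fin t2, ∃ N, ∀ m ≥ N, ∀ p ∈ F2 j,
            |Sfun α (u (φ m)) p - Sfun α k p| ≤ 3 * δ / 4 := by
          intro j
          rcases (F2 j).eq_empty_or_nonempty with he | ⟨q, hq⟩
          · exact ⟨0, fun m _ p hp => by rw [he] at hp; exact absurd hp (Set.notMem_empty _)⟩
          · have hqD := hF2D j hq
            have hconv : Tendsto (fun m => Sfun α (u (φ m)) q) atTop (nhds (Sfun α k q)) := by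
              refine Tendsto.mul_const _ ?_
              exact (hptconv q.1 (subset_closure ((hDmem q).1 hqD).1.1)).sub
                (hptconv q.2 (subset_closure ((hDmem q).1 hqD).1.2))
            obtain ⟨N, hN⟩ := (Metric.tendsto_atTop.1 hconv) (δ / 4) (by positivity)
            refine ⟨N, fun m hm p hp => ?_⟩
            have h1 : |Sfun α (u (φ m)) p - Sfun α (u (φ m)) q| ≤ δ / 4 := by
              have := Metric.dist_le_diam_of_mem (hSbdd _ (hu (φ m)) _ (hF2D j))
                (Set.mem_image_of_mem _ hp) (Set.mem_image_of_mem _ hq)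
              rw [Real.dist_eq] at this
              exact this.trans (hF2diam j _ (hu (φ m))).le
            have h2 : |Sfun α (u (φ m)) q - Sfun α k q| < δ / 4 := by
              have := hN m hm
              rwa [Real.dist_eq] at this
            have h3 : |Sfun α k q - Sfun α k p| ≤ δ / 4 := hosc j q hq p hp
            calc |Sfun α (u (φ m)) p - Sfun α k p|
                = |(Sfun α (u (φ m)) p - Sfun α (u (φ m)) q)
                  + (Sfun α (u (φ m)) q - Sfun α k q) + (Sfun α k q - Sfun α k p)| := by ring_nf
              _ ≤ |Sfun α (u (φ m)) p - Sfun α (u (φ m)) q|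
                  + |Sfun α (u (φ m)) q - Sfun α k q| + |Sfun α k q - Sfun α k p| :=
                  abs_add_three _ _ _
              _ ≤ 3 * δ / 4 := by linarith
        choose NN hNN using hNj
        refine ⟨Finset.univ.sup NN, fun m hm => ?_⟩
        -- quotient bound on Ω
        have hqb : ∀ x ∈ Ω, ∀ y ∈ Ω,
            |(u (φ m) x - k x) - (u (φ m) y - k y)| ≤ (3 * δ / 4) * ‖x - y‖ ^ α := by
          intro x hx y hy
          rcases eq_or_ne x y with rfl | hxy
          · simp [Real.zero_rpow hα0.ne']
          · have hpD : (x, y) ∈ D := (hDmem (x, y)).2 ⟨⟨hx, hy⟩, hxy⟩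
            obtain ⟨j, hj⟩ := Set.mem_iUnion.1 (hF2cov hpD)
            have hm' : m ≥ NN j := le_trans (Finset.le_sup (Finset.mem_univ j)) hm
            have h1 := hNN j m hm' _ hj
            rw [← Sfun_sub] at h1
            rw [Sfun_abs hα0] at h1
            have := (div_le_iff₀ (rpow_pos_of_ne hxy)).1 h1
            simpa using this
        have hqbc : ∀ x ∈ closure Ω, ∀ y ∈ closure Ω,
            |(u (φ m) x - k x) - (u (φ m) y - k y)| ≤ (3 * δ / 4) * ‖x - y‖ ^ α :=
          extend_closure hα0 (((hK _ (hu (φ m))).1).sub hkc) hqb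
        refine Real.sSup_le ?_ hδ.le
        intro r hr
        have := holder_le_of_forall hqbc r hr
        linarith
      have := hA.add hB
      rw [add_zero] at this
      exact this
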